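/- Let f : E → ℝ be μ-strongly convex (μ > 0), let x* be its minimizer with p* = f(x*), and let (x_k) be generated by x_{k+1} = x_k − α_k g_k with g_k ∈ ∂f(x_k) and α_k = λ_k/(μ ∑_{i=0}^k λ_i) for positive weights λ_k. Then for each k, (μ/2)(∑_{i=0}^{k} λ_i)‖x_{k+1} − x*‖² ≤ (μ/2)(∑_{i=0}^{k−1} λ_i)‖x_k − x*‖² − λ_k (f(x_k) − p*) + (λ_k α_k / 2)‖g_k‖². -/

import Mathlib

open RealInnerProductSpace

/-- Primal inductive inequality for the subgradient method on a
`μ`-strongly convex function. -/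
theorem stmt_10 {E : Type*} [NormedAddCommGroup E] [InnerProductSpace ℝ E]
    [FiniteDimensional ℝ E]
    (μ : ℝ) (hμ : 0 < μ) (f : E → ℝ) (xstar : E)
    (hmin : ∀ y, f xstar ≤ f y)
    (x g : ℕ → E) (lam α : ℕ → ℝ) (hlam : ∀ k, 0 < lam k)
    (hsub : ∀ k y, f y ≥ f (x k) + ⟪g k, y - x k⟫ + (μ / 2) * ‖y - x k‖ ^ 2)
    (hα : ∀ k, α k = lam k / (μ * ∑ i ∈ Finset.range (k + 1), lam i))
    (hx : ∀ k, x (k + 1) = x k - α k • g k) :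
    ∀ k, (μ / 2) * (∑ i ∈ Finset.range (k + 1), lam i) * ‖x (k + 1) - xstar‖ ^ 2 ≤
      (μ / 2) * (∑ i ∈ Finset.range k, lam i) * ‖x k - xstar‖ ^ 2
        - lam k * (f (x k) - f xstar) + (lam k * α k / 2) * ‖g k‖ ^ 2 := by
  intro k
  set S := ∑ i ∈ Finset.range (k + 1), lam i with hSdef
  have hSpos : 0 < S := Finset.sum_pos (fun i _ => hlam i) ⟨k, Finset.self_mem_range_succ k⟩
  have hμS : μ * S * α k = lam k := by
    rw [hα k, ← hSdef]; field_simp [hSpos.ne']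
  have hsplit : S = (∑ i ∈ Finset.range k, lam i) + lam k := Finset.sum_range_succ lam k
  have hgrad : f (x k) - f xstar + μ / 2 * ‖x k - xstar‖ ^ 2 ≤ ⟪g k, x k - xstar⟫ := by
    have h := hsub k xstar
    have h1 : ⟪g k, xstar - x k⟫ = -⟪g k, x k - xstar⟫ := by
      rw [← inner_neg_right, neg_sub]
    have h2 : ‖xstar - x k‖ = ‖x k - xstar‖ := norm_sub_rev _ _
    rw [h1, h2] at h
    linarith
  have hexp : ‖x (k + 1) - xstar‖ ^ 2
      = ‖x k - xstar‖ ^ 2 - 2 * α k * ⟪g k, x k - xstar⟫ + α k ^ 2 * ‖g k‖ ^ 2 := by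
    have heq : x (k + 1) - xstar = (x k - xstar) - α k • g k := by
      rw [hx k]; abel
    rw [heq, norm_sub_sq_real, real_inner_smul_right, norm_smul,
      real_inner_comm]
    simp [mul_pow, sq_abs]
    ring
  rw [hexp]
  have e1 : μ / 2 * S * (2 * α k * ⟪g k, x k - xstar⟫) = lam k * ⟪g k, x k - xstar⟫ := by
    linear_combination (⟪g k, x k - xstar⟫ : ℝ) * hμS
  have e2 : μ / 2 * S * (α k ^ 2 * ‖g k‖ ^ 2) = lam k * α k / 2 * ‖g k‖ ^ 2 := by
    linear_combination (α k * ‖g k‖ ^ 2 / 2) * hμS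
  have e3 : μ / 2 * S * ‖x k - xstar‖ ^ 2
      = μ / 2 * (∑ i ∈ Finset.range k, lam i) * ‖x k - xstar‖ ^ 2
        + μ / 2 * lam k * ‖x k - xstar‖ ^ 2 := by
    linear_combination (μ / 2 * ‖x k - xstar‖ ^ 2) * hsplit
  have e4 := mul_le_mul_of_nonneg_left hgrad (le_of_lt (hlam k))
  linarith [e1, e2, e3, e4]
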